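/- Let f be a formal power series and suppose (Q_{\mathbf{n}_1,0}, Q_{\mathbf{n}_1,1}, Q_{\mathbf{n}_1,2}) and (Q_{\mathbf{n}_2,0}, Q_{\mathbf{n}_2,1}, Q_{\mathbf{n}_2,2}) are two triples of polynomials satisfying Q_{\mathbf{n}_k,0} + Q_{\mathbf{n}_k,1} f + Q_{\mathbf{n}_k,2} f^2 = O(z^{3n+1}) for k = 1, 2, with all degrees at most n. Then the determinant polynomial P := Q_{\mathbf{n}_1,1} Q_{\mathbf{n}_2,2} - Q_{\mathbf{n}_2,1} Q_{\mathbf{n}_1,2} has degree at most 2n and satisfies: there exist polynomials P_1, P_2 of degree at most 2n with P f - P_1 = O(z^{3n+1}) and P f^2 - P_2 = O(z^{3n+1}). -/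

import Mathlib

open Polynomial PowerSeries

private lemma coeff_mul_eq_zero (g h : PowerSeries ℂ) (m : ℕ)
    (hg : ∀ j ≤ m, PowerSeries.coeff j g = 0) :
    ∀ k ≤ m, PowerSeries.coeff k (h * g) = 0 := by
  intro k hk
  rw [PowerSeries.coeff_mul]
  apply Finset.sum_eq_zero
  intro p hp
  rw [Finset.HasAntidiagonal.mem_antidiagonal] at hp
  rw [hg p.2 (le_trans (by omega) hk), mul_zero]

/-- The 2×2 determinant of two type I Hermite–Padé systems for `[1, f, f²]` is a
type II Hermite–Padé denominator for the pair `(f, f²)`. -/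
theorem hermitePade_det_typeII (f : PowerSeries ℂ) (n : ℕ)
    (A₀ A₁ A₂ B₀ B₁ B₂ : Polynomial ℂ)
    (hA₀ : A₀.natDegree ≤ n) (hA₁ : A₁.natDegree ≤ n) (hA₂ : A₂.natDegree ≤ n)
    (hB₀ : B₀.natDegree ≤ n) (hB₁ : B₁.natDegree ≤ n) (hB₂ : B₂.natDegree ≤ n)
    (hA : ∀ k ≤ 3 * n,
      PowerSeries.coeff k
        ((A₀ : PowerSeries ℂ) + (A₁ : PowerSeries ℂ) * f + (A₂ : PowerSeries ℂ) * f ^ 2) = 0)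
    (hB : ∀ k ≤ 3 * n,
      PowerSeries.coeff k
        ((B₀ : PowerSeries ℂ) + (B₁ : PowerSeries ℂ) * f + (B₂ : PowerSeries ℂ) * f ^ 2) = 0) :
    (A₁ * B₂ - B₁ * A₂).natDegree ≤ 2 * n ∧
    ∃ P₁ P₂ : Polynomial ℂ, P₁.natDegree ≤ 2 * n ∧ P₂.natDegree ≤ 2 * n ∧
      ∀ k ≤ 3 * n,
        PowerSeries.coeff k
          (((A₁ * B₂ - B₁ * A₂ : Polynomial ℂ) : PowerSeries ℂ) * f - (P₁ : PowerSeries ℂ)) = 0 ∧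
        PowerSeries.coeff k
          (((A₁ * B₂ - B₁ * A₂ : Polynomial ℂ) : PowerSeries ℂ) * f ^ 2 - (P₂ : PowerSeries ℂ)) = 0 := by
  set RA : PowerSeries ℂ :=
    (A₀ : PowerSeries ℂ) + (A₁ : PowerSeries ℂ) * f + (A₂ : PowerSeries ℂ) * f ^ 2 with hRA
  set RB : PowerSeries ℂ :=
    (B₀ : PowerSeries ℂ) + (B₁ : PowerSeries ℂ) * f + (B₂ : PowerSeries ℂ) * f ^ 2 with hRB
  have hdeg : ∀ (p q r s : Polynomial ℂ), p.natDegree ≤ n → q.natDegree ≤ n →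
      r.natDegree ≤ n → s.natDegree ≤ n → (p * q - r * s).natDegree ≤ 2 * n := by
    intro p q r s hp hq hr hs
    apply le_trans (natDegree_sub_le _ _)
    apply max_le <;> apply le_trans (natDegree_mul_le) <;> omega
  refine ⟨hdeg _ _ _ _ hA₁ hB₂ hB₁ hA₂, A₂ * B₀ - B₂ * A₀, B₁ * A₀ - A₁ * B₀,
    hdeg _ _ _ _ hA₂ hB₀ hB₂ hA₀, hdeg _ _ _ _ hB₁ hA₀ hA₁ hB₀, ?_⟩
  intro k hk
  constructor
  · have key : ((A₁ * B₂ - B₁ * A₂ : Polynomial ℂ) : PowerSeries ℂ) * f -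
        ((A₂ * B₀ - B₂ * A₀ : Polynomial ℂ) : PowerSeries ℂ) =
        (B₂ : PowerSeries ℂ) * RA + (-(A₂ : PowerSeries ℂ)) * RB := by
      rw [hRA, hRB]
      push_cast
      ring
    rw [key, map_add, coeff_mul_eq_zero RA _ _ hA k hk, coeff_mul_eq_zero RB _ _ hB k hk,
      add_zero]
  · have key : ((A₁ * B₂ - B₁ * A₂ : Polynomial ℂ) : PowerSeries ℂ) * f ^ 2 -
        ((B₁ * A₀ - A₁ * B₀ : Polynomial ℂ) : PowerSeries ℂ) =
        (A₁ : PowerSeries ℂ) * RB + (-(B₁ : PowerSeries ℂ)) * RA := by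
      rw [hRA, hRB]
      push_cast
      ring
    rw [key, map_add, coeff_mul_eq_zero RA _ _ hA k hk, coeff_mul_eq_zero RB _ _ hB k hk,
      add_zero]
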